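/- arXiv:1810.09664 — 2 statements merged into one kernel-verified Lean document; each statement's English description precedes it below -/
import Mathlib

section
/- For every dimension n ≥ 1, every real b₁ with n + b₁ > 0, and all positive constants c, b₂ > 0, there is a constant C > 0 such that for all t > 0: ∫_{|ξ| ≤ 1} |ξ|^{b₁} e^{-c |ξ|^{b₂} t} dξ ≤ C (1 + t)^{-(n + b₁)/b₂}. -/
open MeasureTheory

open Set Real Metric in
private lemma my_lintegral_polar {E : Type*} [NormedAddCommGroup E] [NormedSpace ℝ E]
    [MeasurableSpace E] [BorelSpace E] [Nontrivial E] (μ : Measure E) [FiniteDimensional ℝ E]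
    [μ.IsAddHaarMeasure] (f : ℝ → ENNReal) (hf : Measurable f) :
    ∫⁻ x, f ‖x‖ ∂μ = μ.toSphere Set.univ *
      ∫⁻ y in Ioi (0:ℝ), ENNReal.ofReal (y ^ (Module.finrank ℝ E - 1)) * f y := by
  have hg : Measurable (f ∘ Subtype.val ∘ Prod.snd :
      sphere (0:E) 1 × Ioi (0:ℝ) → ENNReal) :=
    hf.comp (measurable_subtype_coe.comp measurable_snd)
  calc
    ∫⁻ x, f ‖x‖ ∂μ = ∫⁻ x : ({(0:E)}ᶜ : Set E), f ‖(x : E)‖ ∂(μ.comap (↑)) := by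
      rw [lintegral_subtype_comap (measurableSet_singleton (0:E)).compl (fun x => f ‖x‖),
        MeasureTheory.restrict_compl_singleton]
    _ = ∫⁻ p : sphere (0:E) 1 × Ioi (0:ℝ), (f ∘ Subtype.val ∘ Prod.snd) p
          ∂(μ.toSphere.prod (Measure.volumeIoiPow (Module.finrank ℝ E - 1))) :=
      by rw [← μ.measurePreserving_homeomorphUnitSphereProd.lintegral_comp hg]
         congr 1; funext x; simp [homeomorphUnitSphereProd]
    _ = μ.toSphere Set.univ *
          ∫⁻ r : Ioi (0:ℝ), f r ∂(Measure.volumeIoiPow (Module.finrank ℝ E - 1)) := by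
      rw [lintegral_prod _ hg.aemeasurable]
      simp only [Function.comp_apply, lintegral_const]
      rw [mul_comm]
    _ = _ := by
      congr 1
      rw [Measure.volumeIoiPow, lintegral_withDensity_eq_lintegral_mul _
        ((measurable_subtype_coe.pow_const _).ennreal_ofReal)
        (show Measurable fun r : Ioi (0:ℝ) => f r from hf.comp measurable_subtype_coe)]
      simp only [Pi.mul_apply]
      exact lintegral_subtype_comap measurableSet_Ioi
        (fun y => ENNReal.ofReal (y ^ (Module.finrank ℝ E - 1)) * f y)

set_option maxHeartbeats 1000000 in
/-- For every dimension `n ≥ 1`, every real `b₁` with `n + b₁ > 0`, and all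
`c, b₂ > 0`, there is `C > 0` such that for all `t > 0`:
`∫_{|ξ| ≤ 1} |ξ|^{b₁} e^{-c|ξ|^{b₂} t} dξ ≤ C (1+t)^{-(n+b₁)/b₂}`. -/
theorem small_frequency_integral (n : ℕ) (hn : 1 ≤ n) (b₁ : ℝ) (hb₁ : 0 < (n : ℝ) + b₁)
    (c b₂ : ℝ) (hc : 0 < c) (hb₂ : 0 < b₂) :
    ∃ C > (0:ℝ), ∀ t : ℝ, 0 < t →
      (∫ ξ in Metric.closedBall (0 : EuclideanSpace ℝ (Fin n)) 1,
          ‖ξ‖ ^ b₁ * Real.exp (-c * ‖ξ‖ ^ b₂ * t)) ≤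
        C * (1 + t) ^ (-((n : ℝ) + b₁) / b₂) := by
  classical
  haveI : Nontrivial (EuclideanSpace ℝ (Fin n)) := Module.nontrivial_of_finrank_pos (R := ℝ)
    (by rw [finrank_euclideanSpace_fin]; omega)
  set p : ℝ := ((n : ℝ) + b₁) / b₂ with hp_def
  have hp : 0 < p := div_pos hb₁ hb₂
  set q : ℝ := (n : ℝ) - 1 + b₁ with hq_def
  have hq : -1 < q := by rw [hq_def]; linarith
  have hq1 : q + 1 = (n : ℝ) + b₁ := by rw [hq_def]; ring
  -- 1-d integrability (by contradiction from the Gamma evaluation)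
  have hint : ∀ a : ℝ, 0 < a →
      IntegrableOn (fun x : ℝ => x ^ q * Real.exp (-a * x ^ b₂)) (Set.Ioi 0) := by
    intro a ha
    by_contra h
    have h2 := integral_rpow_mul_exp_neg_mul_rpow hb₂ hq ha
    rw [MeasureTheory.integral_undef h] at h2
    have hΓ : 0 < Real.Gamma ((q + 1) / b₂) :=
      Real.Gamma_pos_of_pos (div_pos (by linarith) hb₂)
    have h3 : 0 < a ^ (-(q + 1) / b₂) * (1 / b₂) * Real.Gamma ((q + 1) / b₂) :=
      mul_pos (mul_pos (Real.rpow_pos_of_pos ha _) (by positivity)) hΓ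
    linarith
  -- the 1-d weighted lintegral
  have lkey : ∀ a : ℝ, 0 < a →
      ∫⁻ y in Set.Ioi (0:ℝ), ENNReal.ofReal (y ^ (n - 1)) *
          ENNReal.ofReal (y ^ b₁ * Real.exp (-a * y ^ b₂)) =
        ENNReal.ofReal (a ^ (-p) * (1 / b₂) * Real.Gamma p) := by
    intro a ha
    have hcongr : ∫⁻ y in Set.Ioi (0:ℝ), ENNReal.ofReal (y ^ (n - 1)) *
          ENNReal.ofReal (y ^ b₁ * Real.exp (-a * y ^ b₂)) =
        ∫⁻ y in Set.Ioi (0:ℝ),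
          ENNReal.ofReal (y ^ q * Real.exp (-a * y ^ b₂)) := by
      refine setLIntegral_congr_fun measurableSet_Ioi ?_
      intro y hy
      have hy' : (0:ℝ) < y := hy
      beta_reduce
      rw [← ENNReal.ofReal_mul (by positivity)]
      congr 1
      rw [← mul_assoc, ← Real.rpow_natCast y (n - 1), ← Real.rpow_add hy]
      congr 2
      rw [Nat.cast_sub hn, Nat.cast_one, hq_def]
    rw [hcongr, ← ofReal_integral_eq_lintegral_ofReal (hint a ha) ?_]
    · rw [integral_rpow_mul_exp_neg_mul_rpow hb₂ hq ha]
      congr 2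
      · congr 1
        rw [hq1, hp_def]; ring
      · rw [hq1, hp_def]
    · filter_upwards [ae_restrict_mem measurableSet_Ioi] with y hy
      have : (0:ℝ) < y := hy
      positivity
  -- measurability of the integrand
  have hmeas : ∀ a : ℝ, Measurable
      (fun ξ : EuclideanSpace ℝ (Fin n) => ‖ξ‖ ^ b₁ * Real.exp (-a * ‖ξ‖ ^ b₂)) := by
    intro a; fun_prop
  set V : ℝ := (volume (Metric.ball (0 : EuclideanSpace ℝ (Fin n)) 1)).toReal with hV_def
  have hV : 0 ≤ V := ENNReal.toReal_nonneg
  have hΓp : 0 < Real.Gamma p := Real.Gamma_pos_of_pos hp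
  set A : ℝ := (n : ℝ) * V * (c ^ (-p) * (1 / b₂) * Real.Gamma p) with hA_def
  have hA : 0 ≤ A := by positivity
  set L : ℝ → ENNReal := fun t => ∫⁻ ξ in Metric.closedBall (0 : EuclideanSpace ℝ (Fin n)) 1,
    ENNReal.ofReal (‖ξ‖ ^ b₁ * Real.exp (-c * ‖ξ‖ ^ b₂ * t)) with hL_def
  have hsphere : (volume : Measure (EuclideanSpace ℝ (Fin n))).toSphere Set.univ =
      ENNReal.ofReal ((n : ℝ) * V) := by
    rw [Measure.toSphere_apply_univ, finrank_euclideanSpace_fin,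
      ← ENNReal.ofReal_toReal
        (measure_ball_lt_top (x := (0 : EuclideanSpace ℝ (Fin n))) (r := 1)).ne,
      ← hV_def, ← ENNReal.ofReal_natCast n, ← ENNReal.ofReal_mul (by positivity)]
  -- the main estimate
  have keyBig : ∀ t : ℝ, 0 < t → L t ≤ ENNReal.ofReal (A * t ^ (-p)) := by
    intro t ht
    have hct : 0 < c * t := by positivity
    calc L t ≤ ∫⁻ ξ : EuclideanSpace ℝ (Fin n),
            ENNReal.ofReal (‖ξ‖ ^ b₁ * Real.exp (-c * ‖ξ‖ ^ b₂ * t)) :=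
          setLIntegral_le_lintegral _ _
      _ = ∫⁻ ξ : EuclideanSpace ℝ (Fin n),
            (fun r : ℝ => ENNReal.ofReal (r ^ b₁ * Real.exp (-(c*t) * r ^ b₂))) ‖ξ‖ := by
          congr 1; funext ξ; congr 2; ring
      _ = (volume : Measure (EuclideanSpace ℝ (Fin n))).toSphere Set.univ *
            ∫⁻ y in Set.Ioi (0:ℝ),
              ENNReal.ofReal (y ^ (Module.finrank ℝ (EuclideanSpace ℝ (Fin n)) - 1)) *
              ENNReal.ofReal (y ^ b₁ * Real.exp (-(c*t) * y ^ b₂)) :=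
          my_lintegral_polar (E := EuclideanSpace ℝ (Fin n)) volume
            (fun r : ℝ => ENNReal.ofReal (r ^ b₁ * Real.exp (-(c*t) * r ^ b₂)))
            ((show Measurable fun r : ℝ => r ^ b₁ * Real.exp (-(c*t) * r ^ b₂)
              from by fun_prop).ennreal_ofReal)
      _ = ENNReal.ofReal ((n:ℝ) * V) *
            ENNReal.ofReal ((c*t) ^ (-p) * (1 / b₂) * Real.Gamma p) := by
          rw [hsphere]
          congr 1
          simp only [finrank_euclideanSpace_fin]
          exact lkey (c*t) hct
      _ = ENNReal.ofReal ((n:ℝ) * V * ((c*t) ^ (-p) * (1 / b₂) * Real.Gamma p)) := by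
          rw [← ENNReal.ofReal_mul (by positivity)]
      _ ≤ ENNReal.ofReal (A * t ^ (-p)) := by
          apply ENNReal.ofReal_le_ofReal
          rw [Real.mul_rpow hc.le ht.le, hA_def]
          apply le_of_eq; ring
  have keySmall : ∀ t : ℝ, 0 < t → t ≤ 1 → L t ≤ ENNReal.ofReal (Real.exp c * A) := by
    intro t ht ht1
    have step1 : L t ≤ ENNReal.ofReal (Real.exp c) * L 1 := by
      rw [hL_def]
      have hconst : ∫⁻ ξ in Metric.closedBall (0 : EuclideanSpace ℝ (Fin n)) 1,
          ENNReal.ofReal (Real.exp c) *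
            ENNReal.ofReal (‖ξ‖ ^ b₁ * Real.exp (-c * ‖ξ‖ ^ b₂ * 1)) =
          ENNReal.ofReal (Real.exp c) *
            ∫⁻ ξ in Metric.closedBall (0 : EuclideanSpace ℝ (Fin n)) 1,
            ENNReal.ofReal (‖ξ‖ ^ b₁ * Real.exp (-c * ‖ξ‖ ^ b₂ * 1)) :=
        lintegral_const_mul' _ _ ENNReal.ofReal_ne_top
      rw [← hconst]
      refine lintegral_mono_ae ?_
      filter_upwards [ae_restrict_mem measurableSet_closedBall] with ξ hξ
      rw [← ENNReal.ofReal_mul (Real.exp_nonneg c)]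
      apply ENNReal.ofReal_le_ofReal
      have hξ1 : ‖ξ‖ ≤ 1 := by
        simpa [dist_eq_norm] using Metric.mem_closedBall.mp hξ
      have hr0 : 0 ≤ ‖ξ‖ ^ b₂ := Real.rpow_nonneg (norm_nonneg ξ) b₂
      have hr1 : ‖ξ‖ ^ b₂ ≤ 1 := Real.rpow_le_one (norm_nonneg ξ) hξ1 hb₂.le
      have haux : (‖ξ‖ ^ b₂) * (1 - t) ≤ 1 := by nlinarith
      have hexp : Real.exp (-c * ‖ξ‖ ^ b₂ * t) ≤ Real.exp c * Real.exp (-c * ‖ξ‖ ^ b₂ * 1) := by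
        rw [← Real.exp_add]
        apply Real.exp_le_exp.mpr
        nlinarith [mul_le_mul_of_nonneg_left haux hc.le]
      calc ‖ξ‖ ^ b₁ * Real.exp (-c * ‖ξ‖ ^ b₂ * t) ≤
          ‖ξ‖ ^ b₁ * (Real.exp c * Real.exp (-c * ‖ξ‖ ^ b₂ * 1)) :=
            mul_le_mul_of_nonneg_left hexp (Real.rpow_nonneg (norm_nonneg ξ) b₁)
        _ = Real.exp c * (‖ξ‖ ^ b₁ * Real.exp (-c * ‖ξ‖ ^ b₂ * 1)) := by ring
    calc L t ≤ ENNReal.ofReal (Real.exp c) * L 1 := step1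
      _ ≤ ENNReal.ofReal (Real.exp c) * ENNReal.ofReal (A * (1:ℝ) ^ (-p)) :=
          by gcongr; exact keyBig 1 one_pos
      _ = ENNReal.ofReal (Real.exp c * A) := by
          rw [Real.one_rpow, mul_one, ← ENNReal.ofReal_mul (Real.exp_nonneg c)]
  -- choose the constant
  refine ⟨2 ^ p * (Real.exp c + 1) * A + 1, by positivity, ?_⟩
  intro t ht
  set C : ℝ := 2 ^ p * (Real.exp c + 1) * A + 1 with hC_def
  have hC : 0 < C := by positivity
  have h2p : (2:ℝ) ^ p * (2:ℝ) ^ (-p) = 1 := by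
    rw [← Real.rpow_add two_pos]; simp
  have h2pneg : (0:ℝ) < (2:ℝ) ^ (-p) := Real.rpow_pos_of_pos two_pos _
  have hCmul : C * 2 ^ (-p) = (Real.exp c + 1) * A + 2 ^ (-p) := by
    have : C * 2 ^ (-p) = (Real.exp c + 1) * A * ((2:ℝ) ^ p * (2:ℝ) ^ (-p)) + 2 ^ (-p) := by
      rw [hC_def]; ring
    rw [this, h2p, mul_one]
  have hCA : A ≤ C * 2 ^ (-p) := by
    rw [hCmul]; nlinarith [Real.exp_pos c]
  have hgoal_exp : -((n : ℝ) + b₁) / b₂ = -p := by rw [hp_def]; ring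
  rw [hgoal_exp]
  have hm' : Measurable (fun ξ : EuclideanSpace ℝ (Fin n) =>
      ‖ξ‖ ^ b₁ * Real.exp (-c * ‖ξ‖ ^ b₂ * t)) := by fun_prop
  have hint_eq : (∫ ξ in Metric.closedBall (0 : EuclideanSpace ℝ (Fin n)) 1,
      ‖ξ‖ ^ b₁ * Real.exp (-c * ‖ξ‖ ^ b₂ * t)) = (L t).toReal := by
    rw [hL_def]
    exact integral_eq_lintegral_of_nonneg_ae
      (Filter.Eventually.of_forall fun ξ => by positivity)
      hm'.aestronglyMeasurable
  rw [hint_eq]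
  have hrpos : (0:ℝ) < (1 + t) ^ (-p) := Real.rpow_pos_of_pos (by linarith) _
  apply ENNReal.toReal_le_of_le_ofReal (by positivity)
  rcases le_or_gt t 1 with ht1 | ht1
  · refine (keySmall t ht ht1).trans (ENNReal.ofReal_le_ofReal ?_)
    have h12 : (2:ℝ) ^ (-p) ≤ (1 + t) ^ (-p) :=
      Real.rpow_le_rpow_of_nonpos (by linarith) (by linarith) (by linarith)
    calc Real.exp c * A ≤ C * 2 ^ (-p) := by
          rw [hCmul]; nlinarith [Real.exp_pos c]
      _ ≤ C * (1 + t) ^ (-p) := mul_le_mul_of_nonneg_left h12 hC.le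
  · refine (keyBig t ht).trans (ENNReal.ofReal_le_ofReal ?_)
    have htpos : (0:ℝ) < t ^ (-p) := Real.rpow_pos_of_pos ht _
    calc A * t ^ (-p) ≤ C * 2 ^ (-p) * t ^ (-p) :=
          mul_le_mul_of_nonneg_right hCA htpos.le
      _ = C * ((2 * t) ^ (-p)) := by
          rw [Real.mul_rpow (by norm_num) ht.le]; ring
      _ ≤ C * (1 + t) ^ (-p) := by
          refine mul_le_mul_of_nonneg_left ?_ hC.le
          exact Real.rpow_le_rpow_of_nonpos (by linarith) (by linarith) (by linarith)
end

section
/- Let λ₁(ξ), λ₂(ξ) be the roots of λ² + |ξ|^{2σ} λ + |ξ|^{2σ} = 0 with λ₁ ≠ λ₂. There exist c > 0, C > 0 and δ ∈ (0,1) such that for all 0 < |ξ| ≤ δ and all t ≥ 0: |(e^{λ₁(ξ) t} - e^{λ₂(ξ) t})/(λ₁(ξ) - λ₂(ξ))| ≤ C |ξ|^{-σ} e^{-c |ξ|^{2σ} t}. -/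
/-- There exist `c > 0`, `C > 0`, `δ ∈ (0,1)` such that for all `ξ` with
`0 < |ξ| ≤ δ`, all `t ≥ 0`, and `λ₁ ≠ λ₂` the two roots of
`λ² + |ξ|^{2σ} λ + |ξ|^{2σ} = 0`, the fundamental-solution multiplier satisfies
`|(e^{λ₁ t} - e^{λ₂ t})/(λ₁ - λ₂)| ≤ C |ξ|^{-σ} e^{-c|ξ|^{2σ} t}`. -/
theorem K1_small_freq_estimate (n : ℕ) (hn : 1 ≤ n) (σ : ℝ) (hσ : 1 ≤ σ) :
    ∃ c > (0:ℝ), ∃ C > (0:ℝ), ∃ δ : ℝ, 0 < δ ∧ δ < 1 ∧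
      ∀ ξ : EuclideanSpace ℝ (Fin n), ξ ≠ 0 → ‖ξ‖ ≤ δ →
        ∀ t : ℝ, 0 ≤ t →
          ∀ lam1 lam2 : ℂ,
            lam1 ^ 2 + ((‖ξ‖ ^ (2 * σ) : ℝ) : ℂ) * lam1 + ((‖ξ‖ ^ (2 * σ) : ℝ) : ℂ) = 0 →
            lam2 ^ 2 + ((‖ξ‖ ^ (2 * σ) : ℝ) : ℂ) * lam2 + ((‖ξ‖ ^ (2 * σ) : ℝ) : ℂ) = 0 →
            lam1 ≠ lam2 →
            ‖(Complex.exp (lam1 * t) - Complex.exp (lam2 * t)) / (lam1 - lam2)‖ ≤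
              C * ‖ξ‖ ^ (-σ) * Real.exp (-c * ‖ξ‖ ^ (2 * σ) * t) := by
  refine ⟨1/2, by norm_num, 2, by norm_num, 1/2, by norm_num, by norm_num, ?_⟩
  intro ξ hξ hδ t ht lam1 lam2 h1 h2 hne
  set a : ℝ := ‖ξ‖ ^ (2 * σ) with ha_def
  have hξ0 : (0:ℝ) < ‖ξ‖ := norm_pos_iff.mpr hξ
  have ha0 : 0 < a := Real.rpow_pos_of_pos hξ0 _
  have ha1 : a ≤ 1 := Real.rpow_le_one (norm_nonneg _) (by linarith) (by linarith)
  -- sum of the roots is -a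
  have hsum : lam1 + lam2 = -(a:ℂ) := by
    have hfac : (lam1 - lam2) * (lam1 + lam2 + (a:ℂ)) = 0 := by
      linear_combination h1 - h2
    rcases mul_eq_zero.mp hfac with h | h
    · exact absurd (sub_eq_zero.mp h) hne
    · linear_combination h
  set μ : ℂ := lam1 + (a:ℂ)/2 with hμ_def
  have hμsq : μ ^ 2 = ((a^2/4 - a : ℝ) : ℂ) := by
    push_cast
    linear_combination h1
  have h_im : 2 * μ.re * μ.im = 0 := by
    have := congrArg Complex.im hμsq
    simp [pow_two, Complex.mul_im] at this
    linarith
  have h_re : μ.re^2 - μ.im^2 = a^2/4 - a := by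
    have := congrArg Complex.re hμsq
    simp [pow_two, Complex.mul_re] at this
    nlinarith [this]
  have hμre : μ.re = 0 := by
    rcases mul_eq_zero.mp h_im with h | h
    · linarith
    · exfalso; rw [h] at h_re; nlinarith [sq_nonneg μ.re]
  have hμim : a / 4 ≤ μ.im ^ 2 := by nlinarith
  -- real parts of the roots
  have hre1 : lam1.re = -a/2 := by
    have : μ.re = lam1.re + a/2 := by simp [hμ_def]
    rw [this] at hμre; linarith
  have hre2 : lam2.re = -a/2 := by
    have : lam2 = -(a:ℂ) - lam1 := by linear_combination hsum
    rw [this]; simp [hre1]; ring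
  -- the difference of roots
  have hdiff : lam1 - lam2 = 2 * μ := by
    rw [hμ_def]; linear_combination -hsum
  have hden : Real.sqrt a ≤ ‖lam1 - lam2‖ := by
    have h4 : a ≤ (‖lam1 - lam2‖)^2 := by
      rw [Complex.sq_norm, Complex.normSq_apply, hdiff]
      simp [Complex.mul_re, Complex.mul_im, hμre]
      nlinarith
    calc Real.sqrt a ≤ Real.sqrt ((‖lam1 - lam2‖)^2) := Real.sqrt_le_sqrt h4
      _ = ‖lam1 - lam2‖ := Real.sqrt_sq (norm_nonneg _)
  have hden0 : 0 < Real.sqrt a := Real.sqrt_pos.mpr ha0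
  -- the numerator
  have hnum : ‖Complex.exp (lam1 * t) - Complex.exp (lam2 * t)‖ ≤
      2 * Real.exp (-a/2 * t) := by
    calc ‖Complex.exp (lam1 * t) - Complex.exp (lam2 * t)‖
        ≤ ‖Complex.exp (lam1 * t)‖ + ‖Complex.exp (lam2 * t)‖ :=
          norm_sub_le _ _
      _ = Real.exp ((lam1 * t).re) + Real.exp ((lam2 * t).re) := by
          rw [Complex.norm_exp, Complex.norm_exp]
      _ = 2 * Real.exp (-a/2 * t) := by
          simp [Complex.mul_re, Complex.ofReal_re, Complex.ofReal_im, hre1, hre2]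
          ring_nf
  have hsqrt : Real.sqrt a = ‖ξ‖ ^ σ := by
    rw [ha_def, Real.sqrt_eq_rpow, ← Real.rpow_mul (norm_nonneg ξ),
      show 2 * σ * (1/2) = σ by ring]
  have hrpowneg : ‖ξ‖ ^ (-σ) = (‖ξ‖ ^ σ)⁻¹ := Real.rpow_neg (norm_nonneg ξ) σ
  calc ‖(Complex.exp (lam1 * t) - Complex.exp (lam2 * t)) / (lam1 - lam2)‖
      = ‖Complex.exp (lam1 * t) - Complex.exp (lam2 * t)‖ /
        ‖lam1 - lam2‖ := norm_div _ _
    _ ≤ (2 * Real.exp (-a/2 * t)) / Real.sqrt a := by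
        apply div_le_div₀ (by positivity) hnum hden0 hden
    _ = 2 * ‖ξ‖ ^ (-σ) * Real.exp (-(1/2) * a * t) := by
        rw [hsqrt, hrpowneg]
        field_simp
end
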